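/- arXiv:2307.00091 — 2 statements merged into one kernel-verified Lean document; each statement's English description precedes it below -/
import Mathlib

section
/- Let r ≥ 2, k = 2, and e be integers with 0 < e ≤ r. If −k − 2er + (e² − 1)/k + kr² < 0 (with (e²−1)/k ∈ ℚ, i.e. 2·(−2 − 2er + (e²−1)/2 + 2r²) < 0 as rationals), then e = r; and then the integrality of 2a − (r² + 3)/(2r) for some integer a forces r to divide 3, hence r = 3; but then −2 − 2·9 + (9−1)/2 + 2·9 = 2 > 0, a contradiction. Hence there are no such integers. -/
/-- Case `k = 2` in the wall analysis of Theorem 7: there are no integers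
`r ≥ 2`, `0 < e ≤ r`, `a`, `m` with `-2 - 2er + (e²-1)/2 + 2r² < 0` and
`m = 2a - (r² + 3)/(2r)`. -/
theorem stmt_7 :
    ¬ ∃ (r e a m : ℤ), 2 ≤ r ∧ 0 < e ∧ e ≤ r ∧
      ((-2 : ℚ) - 2 * (e : ℚ) * r + ((e : ℚ) ^ 2 - 1) / 2 + 2 * (r : ℚ) ^ 2 < 0) ∧
      ((m : ℚ) = 2 * (a : ℚ) - ((r : ℚ) ^ 2 + 3) / (2 * r)) := by
  rintro ⟨r, e, a, m, hr, he, her, hineq, hm⟩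
  have h1 : ((2 * r - e : ℤ) : ℚ) ^ 2 < 5 := by push_cast; nlinarith [hineq]
  have h1' : (2 * r - e) ^ 2 < 5 := by exact_mod_cast h1
  have hre : r = 2 ∧ e = 2 := by
    constructor <;> nlinarith [sq_nonneg (2 * r - e - 2), sq_nonneg (2 * r - e)]
  obtain ⟨rfl, rfl⟩ := hre
  have hr0 : ((2 : ℤ) : ℚ) ≠ 0 := by norm_num
  rw [show ((2:ℤ):ℚ)^2 + 3 = 7 by norm_num] at hm
  have h4 : (4 : ℚ) * m = 8 * a - 7 := by field_simp at hm ⊢; push_cast at hm; linarith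
  have : (4 : ℤ) * m = 8 * a - 7 := by exact_mod_cast h4
  omega
end

section
/- Let r ≥ 2, k ≥ 5/2 be a half-integer, and e a rational with 0 < e ≤ r. Then the quantity P = −k − 2er + (e² − 1)/k + kr² satisfies P > −9/10; hence if P is a negative integer, no such k exists (since P ∈ ℤ and −9/10 < P < 0 is impossible). -/
/-- Step 3 of Theorem 7: for a half-integer `k ≥ 5/2`, an integer `r ≥ 2` and a
rational `0 < e ≤ r`, the quantity `P = -k - 2er + (e² - 1)/k + kr²` satisfies
`P > -9/10`; hence `P` cannot be a negative integer. -/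
theorem stmt_14 (r : ℤ) (k e : ℚ) (hr : 2 ≤ r)
    (hk : ∃ k₁ : ℤ, 2 * k = (k₁ : ℚ)) (hk2 : 5 / 2 ≤ k)
    (he : 0 < e) (her : e ≤ (r : ℚ)) :
    -9 / 10 < -k - 2 * e * r + (e ^ 2 - 1) / k + k * (r : ℚ) ^ 2 ∧
    ¬ ∃ n : ℤ, (n : ℚ) = -k - 2 * e * r + (e ^ 2 - 1) / k + k * (r : ℚ) ^ 2 ∧
        (n : ℚ) < 0 := by
  have hk0 : (0 : ℚ) < k := by linarith
  have hrq : (2 : ℚ) ≤ (r : ℚ) := by exact_mod_cast hr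
  have hD : (e ^ 2 - 1) / k * k = e ^ 2 - 1 := div_mul_cancel₀ _ (ne_of_gt hk0)
  have hmain : -9 / 10 < -k - 2 * e * r + (e ^ 2 - 1) / k + k * (r : ℚ) ^ 2 := by
    have h2 : 0 < k * (-k - 2 * e * r + (e ^ 2 - 1) / k + k * (r : ℚ) ^ 2 + 9 / 10) := by
      have expand : k * (-k - 2 * e * r + (e ^ 2 - 1) / k + k * (r : ℚ) ^ 2 + 9 / 10)
          = -k ^ 2 - 2 * e * r * k + (e ^ 2 - 1) + k ^ 2 * (r : ℚ) ^ 2 + 9 / 10 * k := by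
        field_simp
      rw [expand]
      nlinarith [mul_nonneg (sub_nonneg.mpr her) (by nlinarith : (0:ℚ) ≤ k * r - e),
        sq_nonneg ((r:ℚ) - e), sq_nonneg ((r:ℚ)*k - k), mul_pos he hk0,
        mul_nonneg (mul_nonneg (by linarith : (0:ℚ) ≤ k - 2) (by linarith : (0:ℚ) ≤ (r:ℚ) - 2)) (by linarith : (0:ℚ) ≤ (r:ℚ) + 2),
        sq_nonneg ((r:ℚ) - 2)]
    nlinarith [h2, hk0]
  refine ⟨hmain, ?_⟩
  rintro ⟨n, hn, hneg⟩
  have hn0 : n < 0 := by exact_mod_cast hneg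
  have hn1 : n ≤ -1 := by omega
  have : (n : ℚ) ≤ -1 := by exact_mod_cast hn1
  linarith [hmain, hn ▸ this]
end
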